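/- Let Z(n) be the n×n matrix with rational entries Z_{s,t} = χ_B(C(s+t,s)) ∈ {−1,0,1} for 0 ≤ s,t < n, where χ_B(x)=0 for x even, 1 for x≡1 mod 4, −1 for x≡3 mod 4. Let f : ℕ → ℚ satisfy f(0)=1, f(1)=−1, f(2^a+b)=3f(b) if 2b<2^a and f(b)/3 otherwise (0 ≤ b < 2^a). Then det(Z(n)) = Π_{k=0}^{n−1} f(k). -/

import Mathlib

/-- The nontrivial Dirichlet character mod 4 evaluated on a natural number,
with value 0 on even numbers, as a rational number. -/
def chiB (x : ℕ) : ℚ :=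
  if x % 2 = 0 then 0 else if x % 4 = 1 then 1 else -1

/-- `f(0)=1`, `f(1)=-1`, and for `n = 2^a + b ≥ 2` with `0 ≤ b < 2^a`:
`f(n) = 3 f(b)` if `2b < 2^a`, and `f(n) = f(b)/3` otherwise. -/
def beebF : ℕ → ℚ
  | 0 => 1
  | 1 => -1
  | (n + 2) =>
      if 2 * ((n + 2) - 2 ^ Nat.log2 (n + 2)) < 2 ^ Nat.log2 (n + 2) then
        3 * beebF ((n + 2) - 2 ^ Nat.log2 (n + 2))
      else
        beebF ((n + 2) - 2 ^ Nat.log2 (n + 2)) / 3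
decreasing_by
  all_goals
    have h2 : 2 ≤ 2 ^ Nat.log2 (n + 2) := by
      have : (1:ℕ) ≤ Nat.log2 (n + 2) := by
        rw [Nat.le_log2 (by omega)]; omega
      calc (2:ℕ) = 2 ^ 1 := by norm_num
      _ ≤ 2 ^ Nat.log2 (n + 2) := Nat.pow_le_pow_right (by norm_num) this
  all_goals omega


open Finset

lemma chiB_congr {x y : ℕ} (h : x % 4 = y % 4) : chiB x = chiB y := by
  unfold chiB
  have hx : x % 2 = x % 4 % 2 := by omega
  have hy : y % 2 = y % 4 % 2 := by omega
  rw [hx, hy, h]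

/-- Lucas step mod 2. -/
lemma parity_step (n k : ℕ) :
    Nat.choose n k % 2 = (Nat.choose (n % 2) (k % 2) * Nat.choose (n / 2) (k / 2)) % 2 := by
  haveI : Fact (Nat.Prime 2) := ⟨Nat.prime_two⟩
  exact Choose.choose_modEq_choose_mod_mul_choose_div_nat (p := 2)

lemma odd_iff_step (n k : ℕ) :
    Nat.choose n k % 2 = 1 ↔
      (¬ (n % 2 = 0 ∧ k % 2 = 1)) ∧ Nat.choose (n / 2) (k / 2) % 2 = 1 := by
  rw [parity_step n k]
  have hn : n % 2 = 0 ∨ n % 2 = 1 := Nat.mod_two_eq_zero_or_one n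
  have hk : k % 2 = 0 ∨ k % 2 = 1 := Nat.mod_two_eq_zero_or_one k
  rcases hn with h1 | h1 <;> rcases hk with h2 | h2 <;>
    simp [h1, h2, Nat.mul_mod, Nat.choose] <;> omega

lemma lemA : ∀ m u v : ℕ, 2^m ≤ u → u < 2^(m+1) → 2^m ≤ v → v < 2^(m+1) →
    Nat.choose (u + v) u % 2 = 0 := by
  intro m
  induction m with
  | zero =>
      intro u v h1 h2 h3 h4
      have : u = 1 ∧ v = 1 := by constructor <;> omega
      simp [this.1, this.2]
  | succ m ih =>
      intro u v h1 h2 h3 h4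
      have hp : (2:ℕ)^(m+1) = 2 * 2^m := by ring
      have hp2 : (2:ℕ)^(m+2) = 4 * 2^m := by ring
      have hu := Nat.div_add_mod u 2
      have hv := Nat.div_add_mod v 2
      have hne : Nat.choose (u + v) u % 2 ≠ 1 → Nat.choose (u + v) u % 2 = 0 := by omega
      apply hne
      rw [Ne, odd_iff_step]
      rcases Nat.mod_two_eq_zero_or_one u with hu2 | hu2 <;>
        rcases Nat.mod_two_eq_zero_or_one v with hv2 | hv2
      · -- both even
        have hs : (u + v) / 2 = u / 2 + v / 2 := by omega
        have := ih (u/2) (v/2) (by omega) (by omega) (by omega) (by omega)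
        rw [hs]
        intro ⟨_, h⟩; omega
      · have hs : (u + v) / 2 = u / 2 + v / 2 := by omega
        have := ih (u/2) (v/2) (by omega) (by omega) (by omega) (by omega)
        rw [hs]
        intro ⟨_, h⟩; omega
      · have hs : (u + v) / 2 = u / 2 + v / 2 := by omega
        have := ih (u/2) (v/2) (by omega) (by omega) (by omega) (by omega)
        rw [hs]
        intro ⟨_, h⟩; omega
      · -- both odd
        intro ⟨h, _⟩
        exact h ⟨by omega, by omega⟩

lemma lemC : ∀ m j : ℕ, j < 2^m → Nat.choose (2^m - 1) j % 2 = 1 := by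
  intro m
  induction m with
  | zero => intro j hj; interval_cases j; simp
  | succ m ih =>
      intro j hj
      have hp : (2:ℕ)^(m+1) = 2 * 2^m := by ring
      have hpos : (1:ℕ) ≤ 2^m := Nat.one_le_two_pow
      rw [odd_iff_step]
      constructor
      · intro ⟨h, _⟩; omega
      · have h1 : (2^(m+1) - 1) / 2 = 2^m - 1 := by omega
        rw [h1]
        exact ih (j/2) (by omega)

lemma lemB : ∀ m u v : ℕ, 2^m ≤ u → u < 2^(m+1) →
    Nat.choose (u + v) u % 2 = 1 → Nat.choose (u + v) (u - 2^m) % 2 = 1 := by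
  intro m
  induction m with
  | zero =>
      intro u v h1 h2 _
      have : u = 1 := by omega
      simp [this]
  | succ m ih =>
      intro u v h1 h2 hodd
      have hp : (2:ℕ)^(m+1) = 2 * 2^m := by ring
      have hp2 : (2:ℕ)^(m+2) = 4 * 2^m := by ring
      have hpos : (1:ℕ) ≤ 2^m := Nat.one_le_two_pow
      rw [odd_iff_step] at hodd ⊢
      obtain ⟨hlow, htop⟩ := hodd
      rcases Nat.mod_two_eq_zero_or_one u with hu2 | hu2 <;>
        rcases Nat.mod_two_eq_zero_or_one v with hv2 | hv2
      · have hs : (u + v) / 2 = u / 2 + v / 2 := by omega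
        rw [hs] at htop
        have := ih (u/2) (v/2) (by omega) (by omega) htop
        refine ⟨by omega, ?_⟩
        have h1 : (u - 2^(m+1)) / 2 = u/2 - 2^m := by omega
        rw [hs, h1]
        exact this
      · have hs : (u + v) / 2 = u / 2 + v / 2 := by omega
        rw [hs] at htop
        have := ih (u/2) (v/2) (by omega) (by omega) htop
        refine ⟨by omega, ?_⟩
        have h1 : (u - 2^(m+1)) / 2 = u/2 - 2^m := by omega
        rw [hs, h1]
        exact this
      · have hs : (u + v) / 2 = u / 2 + v / 2 := by omega
        rw [hs] at htop
        have := ih (u/2) (v/2) (by omega) (by omega) htop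
        refine ⟨by omega, ?_⟩
        have h1 : (u - 2^(m+1)) / 2 = u/2 - 2^m := by omega
        rw [hs, h1]
        exact this
      · exfalso; exact hlow ⟨by omega, by omega⟩

/-- `i * C(2^m, i) = 2^m * C(2^m - 1, i - 1)` for `1 ≤ i`. -/
lemma key_identity (m i : ℕ) (hi : 1 ≤ i) :
    2^m * Nat.choose (2^m - 1) (i - 1) = Nat.choose (2^m) i * i := by
  have hpos : (1:ℕ) ≤ 2^m := Nat.one_le_two_pow
  have := Nat.add_one_mul_choose_eq (2^m - 1) (i - 1)
  have h1 : (2^m - 1) + 1 = 2^m := by omega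
  have h2 : (i - 1) + 1 = i := by omega
  rw [h1] at this
  simpa [h2, Nat.succ_eq_add_one] using this

lemma lemV2 (m : ℕ) (hm : 1 ≤ m) : Nat.choose (2^m) (2^(m-1)) % 4 = 2 := by
  have hm' : m = (m - 1) + 1 := by omega
  have hp : (2:ℕ)^m = 2 * 2^(m-1) := by
    calc (2:ℕ)^m = 2^((m-1)+1) := by rw [← hm']
    _ = 2 * 2^(m-1) := by rw [pow_succ]; ring
  have hpos : (1:ℕ) ≤ 2^(m-1) := Nat.one_le_two_pow
  have hid := key_identity m (2^(m-1)) hpos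
  have hodd := lemC m (2^(m-1) - 1) (by omega)
  -- 2 * 2^(m-1) * C' = C * 2^(m-1)  →  C = 2 C'
  have hC : Nat.choose (2^m) (2^(m-1)) = 2 * Nat.choose (2^m - 1) (2^(m-1) - 1) := by
    have h2 : 2^(m-1) * (2 * Nat.choose (2^m - 1) (2^(m-1) - 1)) =
        2^(m-1) * Nat.choose (2^m) (2^(m-1)) := by
      calc 2^(m-1) * (2 * Nat.choose (2^m - 1) (2^(m-1) - 1))
          = (2 * 2^(m-1)) * Nat.choose (2^m - 1) (2^(m-1) - 1) := by ring
        _ = 2^m * Nat.choose (2^m - 1) (2^(m-1) - 1) := by rw [← hp]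
        _ = Nat.choose (2^m) (2^(m-1)) * 2^(m-1) := hid
        _ = 2^(m-1) * Nat.choose (2^m) (2^(m-1)) := by ring
    exact (Nat.eq_of_mul_eq_mul_left (by omega) h2).symm
  omega

lemma lemV3 (m i : ℕ) (h0 : 0 < i) (h1 : i < 2^m) (h2 : i ≠ 2^(m-1)) :
    Nat.choose (2^m) i % 4 = 0 := by
  obtain ⟨e, o, ho, hio⟩ := Nat.exists_eq_pow_mul_and_not_dvd (Nat.pos_iff_ne_zero.mp h0) 2 (by norm_num)
  have hopos : 0 < o := by
    rcases Nat.eq_zero_or_pos o with h | h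
    · subst h; simp at hio; omega
    · exact h
  have hem : e < m := by
    by_contra h
    push_neg at h
    have : 2^m ≤ 2^e := Nat.pow_le_pow_right (by norm_num) h
    have : 2^e ≤ 2^e * o := Nat.le_mul_of_pos_right _ hopos
    omega
  have hem2 : e + 2 ≤ m := by
    rcases Nat.lt_or_ge e (m-1) with h | h
    · omega
    · exfalso
      have he : e = m - 1 := by omega
      subst he
      have : o = 1 := by
        by_contra ho1
        have : 2 ≤ o := by omega
        have : 2 * 2^(m-1) ≤ 2^(m-1) * o := by nlinarith [Nat.one_le_two_pow (n := m-1)]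
        have hp : (2:ℕ)^m = 2 * 2^(m-1) := by
          have hm1 : m = (m-1)+1 := by omega
          calc (2:ℕ)^m = 2^((m-1)+1) := by rw [← hm1]
          _ = 2 * 2^(m-1) := by rw [pow_succ]; ring
        omega
      apply h2; rw [hio, this, mul_one]
  -- from identity: o * C = 2^(m-e) * C'
  have hid := key_identity m i (by omega)
  have hpow : (2:ℕ)^m = 2^e * 2^(m-e) := by
    rw [← pow_add]; congr 1; omega
  have hdvd : 2^(m-e) ∣ o * Nat.choose (2^m) i := by
    have h3 : 2^e * (2^(m-e) * Nat.choose (2^m - 1) (i - 1)) =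
        2^e * (o * Nat.choose (2^m) i) := by
      rw [← mul_assoc, ← hpow, hid, hio]; ring
    have := Nat.eq_of_mul_eq_mul_left (pow_pos (by norm_num) e) h3
    exact ⟨_, this.symm⟩
  have hcop : Nat.Coprime (2^(m-e)) o := Nat.Coprime.pow_left _ ((Nat.prime_two.coprime_iff_not_dvd).mpr ho)
  have hdvd2 : 2^(m-e) ∣ Nat.choose (2^m) i := (Nat.Coprime.dvd_of_dvd_mul_left hcop hdvd)
  have h4 : (4:ℕ) ∣ 2^(m-e) := by
    have : (4:ℕ) = 2^2 := by norm_num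
    rw [this]
    exact Nat.pow_dvd_pow 2 (by omega)
  exact Nat.mod_eq_zero_of_dvd (h4.trans hdvd2)

/-- Vandermonde mod 4: `C(2^m + n, s) ≡ C(n,s) + 2·C(n, s-2^(m-1))·[2^(m-1) ≤ s]  (mod 4)`. -/
lemma key4 (m : ℕ) (hm : 1 ≤ m) (s n : ℕ) (hs : s < 2^m) :
    ((Nat.choose (2^m + n) s : ZMod 4)) =
      (Nat.choose n s : ZMod 4) +
        (if 2^(m-1) ≤ s then (2 : ZMod 4) * (Nat.choose n (s - 2^(m-1)) : ZMod 4) else 0) := by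
  have hh : 0 < 2^(m-1) := pow_pos (by norm_num) _
  rw [Nat.add_choose_eq]
  push_cast
  rw [Finset.Nat.sum_antidiagonal_eq_sum_range_succ_mk]
  have hterm : ∀ i ∈ Finset.range (s+1),
      ((Nat.choose (2^m) i : ZMod 4) * (Nat.choose n (s - i) : ZMod 4)) =
        (if i = 0 then (Nat.choose n s : ZMod 4) else 0) +
        (if i = 2^(m-1) then (2 : ZMod 4) * (Nat.choose n (s - 2^(m-1)) : ZMod 4) else 0) := by
    intro i hi
    rw [Finset.mem_range] at hi
    by_cases h0 : i = 0
    · subst h0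
      rw [if_pos rfl, if_neg (by omega)]
      simp
    · by_cases hh2 : i = 2^(m-1)
      · subst hh2
        have hv2 := lemV2 m hm
        have : ((Nat.choose (2^m) (2^(m-1)) : ℕ) : ZMod 4) = (2 : ZMod 4) := by
          rw [← ZMod.natCast_mod, hv2]; rfl
        rw [this]
        simp [Nat.pos_iff_ne_zero.mp hh]
      · have hv3 := lemV3 m i (by omega) (by omega) hh2
        have : ((Nat.choose (2^m) i : ℕ) : ZMod 4) = 0 := by
          rw [← ZMod.natCast_mod, hv3]; rfl
        rw [this, zero_mul]
        simp [h0, hh2]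
  rw [Finset.sum_congr rfl hterm, Finset.sum_add_distrib]
  rw [Finset.sum_ite_eq' (Finset.range (s+1)) 0, Finset.sum_ite_eq' (Finset.range (s+1)) (2^(m-1))]
  simp only [Finset.mem_range]
  rw [if_pos (by omega)]
  congr 1
  by_cases h : 2^(m-1) ≤ s
  · rw [if_pos (by omega), if_pos h]
  · rw [if_neg (by omega), if_neg h]

/-- F3: the sign-flip lemma. -/
lemma lemF3 (m : ℕ) (hm : 1 ≤ m) (s n : ℕ) (hs : s < 2^m) :
    chiB (Nat.choose (2^m + n) s) =
      (if 2^(m-1) ≤ s then (-1 : ℚ) else 1) * chiB (Nat.choose n s) := by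
  have hk := key4 m hm s n hs
  by_cases hcase : 2^(m-1) ≤ s
  · rw [if_pos hcase] at hk ⊢
    -- C1 ≡ C2 + 2*C3 [MOD 4]
    have hmod : Nat.choose (2^m + n) s % 4 =
        (Nat.choose n s + 2 * Nat.choose n (s - 2^(m-1))) % 4 := by
      have : ((Nat.choose (2^m + n) s : ℕ) : ZMod 4) =
          ((Nat.choose n s + 2 * Nat.choose n (s - 2^(m-1)) : ℕ) : ZMod 4) := by
        push_cast
        rw [hk]
      rwa [ZMod.natCast_eq_natCast_iff'] at this
    have h3odd : Nat.choose n s % 2 = 1 → Nat.choose n (s - 2^(m-1)) % 2 = 1 := by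
      intro h2
      by_cases hsn : s ≤ n
      · have hns : s + (n - s) = n := by omega
        have hm' : m = (m-1) + 1 := by omega
        have hpow : (2:ℕ)^(m-1+1) = 2^m := by rw [← hm']
        have := lemB (m-1) s (n - s) hcase (by rw [hpow]; exact hs) (by rw [hns]; exact h2)
        rwa [hns] at this
      · exfalso
        have : Nat.choose n s = 0 := Nat.choose_eq_zero_of_lt (by omega)
        omega
    rcases Nat.mod_two_eq_zero_or_one (Nat.choose n s) with h2 | h2
    · have e1 : Nat.choose (2^m + n) s % 2 = 0 := by omega
      simp [chiB, e1, h2]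
    · have h3 := h3odd h2
      have hC2m : Nat.choose n s % 4 = 1 ∨ Nat.choose n s % 4 = 3 := by omega
      rcases hC2m with h | h
      · have e1 : Nat.choose (2^m + n) s % 2 = 1 := by omega
        have e2 : Nat.choose (2^m + n) s % 4 = 3 := by omega
        have e3 : Nat.choose n s % 2 = 1 := h2
        simp [chiB, e1, e2, e3, h]
      · have e1 : Nat.choose (2^m + n) s % 2 = 1 := by omega
        have e2 : Nat.choose (2^m + n) s % 4 = 1 := by omega
        have e3 : Nat.choose n s % 2 = 1 := h2
        simp [chiB, e1, e2, e3, h]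
  · rw [if_neg hcase] at hk ⊢
    have hmod : Nat.choose (2^m + n) s % 4 = Nat.choose n s % 4 := by
      have : ((Nat.choose (2^m + n) s : ℕ) : ZMod 4) = ((Nat.choose n s : ℕ) : ZMod 4) := by
        rw [hk, add_zero]
      rwa [ZMod.natCast_eq_natCast_iff'] at this
    rw [one_mul]
    exact chiB_congr hmod

/-- F2: entries vanish on the high-high block. -/
lemma lemF2 (m s t : ℕ) (h1 : 2^m ≤ s) (h2 : s < 2^(m+1)) (h3 : 2^m ≤ t) (h4 : t < 2^(m+1)) :
    chiB (Nat.choose (s + t) s) = 0 := by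
  have := lemA m s t h1 h2 h3 h4
  unfold chiB
  rw [if_pos this]

lemma zf_comm (s t : ℕ) : chiB (Nat.choose (s + t) s) = chiB (Nat.choose (s + t) t) := by
  congr 1
  rw [← Nat.choose_symm (Nat.le_add_right s t)]
  congr 1
  omega

def Zf (s t : ℕ) : ℚ := chiB (Nat.choose (s + t) s)

lemma Zf_comm (s t : ℕ) : Zf s t = Zf t s := by
  unfold Zf
  rw [zf_comm]
  congr 2
  omega

lemma Zf_high {m s t : ℕ} (h1 : 2^m ≤ s) (h2 : s < 2^(m+1)) (h3 : 2^m ≤ t)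
    (h4 : t < 2^(m+1)) : Zf s t = 0 :=
  lemF2 m s t h1 h2 h3 h4

lemma Zf_shift {m : ℕ} (hm : 1 ≤ m) {s : ℕ} (t : ℕ) (hs : s < 2^m) :
    Zf s (2^m + t) = (if 2^(m-1) ≤ s then (-1 : ℚ) else 1) * Zf s t := by
  unfold Zf
  have h1 : s + (2^m + t) = 2^m + (s + t) := by omega
  rw [h1]
  exact lemF3 m hm s (s + t) hs

def Xm : ℕ → ℕ → ℕ → ℚ
  | 0, s, t => if s = 0 ∧ t = 0 then 1 else 0
  | (a+1), s, t =>
      if s < 2^a then (if t = s then -1 else 0)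
      else if t < 2^a then 2 * Xm a (s - 2^a) t
      else if t = s then 1 else 0

lemma Zf_00 : Zf 0 0 = 1 := by norm_num [Zf, chiB]
lemma Zf_01 : Zf 0 1 = 1 := by norm_num [Zf, chiB]
lemma Zf_10 : Zf 1 0 = 1 := by norm_num [Zf, chiB]
lemma Zf_11 : Zf 1 1 = 0 := by norm_num [Zf, chiB]


lemma Xm_low {a k t : ℕ} (hk : k < 2^a) : Xm (a+1) k t = if t = k then -1 else 0 := by
  unfold Xm; rw [if_pos hk]

lemma Xm_high_low {a k t : ℕ} (hk : ¬ k < 2^a) (ht : t < 2^a) :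
    Xm (a+1) k t = 2 * Xm a (k - 2^a) t := by
  rw [Xm]; rw [if_neg hk, if_pos ht]

lemma Xm_high_high {a k t : ℕ} (hk : ¬ k < 2^a) (ht : ¬ t < 2^a) :
    Xm (a+1) k t = if t = k then 1 else 0 := by
  unfold Xm; rw [if_neg hk, if_neg ht]

open Finset in
lemma lemI1 : ∀ a, 1 ≤ a → ∀ s t, s < 2^a → t < 2^a →
    ∑ k ∈ range (2^a), Zf s k * Xm a k t =
      (if 2^(a-1) ≤ s then (-1:ℚ) else 1) * Zf s t := by
  intro a ha
  induction a, ha using Nat.le_induction with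
  | base =>
      intro s t hs ht
      norm_num at hs ht
      interval_cases s <;> interval_cases t <;>
        simp [Xm, Finset.sum_range_succ, Zf_00, Zf_01, Zf_10, Zf_11] <;> norm_num
  | succ a ha ih =>
      intro s t hs ht
      simp only [Nat.add_sub_cancel]
      have hpow : (2:ℕ)^(a+1) = 2^a + 2^a := by ring
      have hpos : (1:ℕ) ≤ 2^a := Nat.one_le_two_pow
      rw [hpow, Finset.sum_range_add]
      have hlow : ∑ k ∈ range (2^a), Zf s k * Xm (a+1) k t
          = if t < 2^a then -Zf s t else 0 := by
        have h1 : ∀ k ∈ range (2^a), Zf s k * Xm (a+1) k t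
            = if t = k then -Zf s k else 0 := by
          intro k hk
          rw [mem_range] at hk
          rw [Xm_low hk]
          by_cases h : t = k <;> simp [h]
        rw [Finset.sum_congr rfl h1, Finset.sum_ite_eq (range (2^a)) t (fun k => -Zf s k)]
        simp [mem_range]
      rw [hlow]
      by_cases hts : t < 2^a
      · rw [if_pos hts]
        have hhigh : ∀ k ∈ range (2^a), Zf s (2^a + k) * Xm (a+1) (2^a + k) t
            = Zf s (2^a + k) * (2 * Xm a k t) := by
          intro k hk
          rw [Xm_high_low (by omega) hts, Nat.add_sub_cancel_left]
        rw [Finset.sum_congr rfl hhigh]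
        by_cases hsl : s < 2^a
        · have hsh : ∀ k ∈ range (2^a), Zf s (2^a + k) * (2 * Xm a k t)
              = (if 2^(a-1) ≤ s then (-1:ℚ) else 1) * (2 * (Zf s k * Xm a k t)) := by
            intro k hk
            rw [Zf_shift ha k hsl]
            ring
          rw [Finset.sum_congr rfl hsh, ← Finset.mul_sum]
          have h2 : ∑ k ∈ range (2^a), (2:ℚ) * (Zf s k * Xm a k t)
              = 2 * ((if 2^(a-1) ≤ s then (-1:ℚ) else 1) * Zf s t) := by
            rw [← Finset.mul_sum, ih s t hsl hts]
          rw [h2]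
          by_cases hc : 2^(a-1) ≤ s
          · rw [if_pos hc, if_neg (show ¬ 2^a ≤ s by omega)]; ring
          · rw [if_neg hc, if_neg (show ¬ 2^a ≤ s by omega)]; ring
        · have hz : ∀ k ∈ range (2^a), Zf s (2^a + k) * (2 * Xm a k t) = 0 := by
            intro k hk
            rw [mem_range] at hk
            rw [Zf_high (m := a) (by omega) (by omega) (by omega) (by omega)]
            ring
          rw [Finset.sum_congr rfl hz, Finset.sum_const, smul_zero,
            if_pos (show 2^a ≤ s by omega)]
          ring
      · rw [if_neg hts]
        have hhigh : ∀ k ∈ range (2^a), Zf s (2^a + k) * Xm (a+1) (2^a + k) t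
            = if t - 2^a = k then Zf s (2^a + k) else 0 := by
          intro k hk
          rw [mem_range] at hk
          rw [Xm_high_high (by omega) hts]
          by_cases h : t = 2^a + k
          · rw [if_pos h, if_pos (show t - 2^a = k by omega), mul_one]
          · rw [if_neg h, if_neg (show ¬ t - 2^a = k by omega), mul_zero]
        rw [Finset.sum_congr rfl hhigh,
          Finset.sum_ite_eq (range (2^a)) (t - 2^a) (fun k => Zf s (2^a + k)),
          if_pos (mem_range.mpr (by omega))]
        have ht2 : 2^a + (t - 2^a) = t := by omega
        rw [ht2, zero_add]
        by_cases hsl : s < 2^a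
        · rw [if_neg (show ¬ 2^a ≤ s by omega), one_mul]
        · rw [Zf_high (m := a) (by omega) (by omega) (by omega) (by omega),
            if_pos (show 2^a ≤ s by omega)]
          ring

open Finset in
lemma lemI2 : ∀ a, 1 ≤ a → ∀ s t, s < 2^a → t < 2^a →
    ∑ k ∈ range (2^a), Zf s k * ((if 2^(a-1) ≤ k then (-1:ℚ) else 1) * Xm a k t) =
      -((if s < 2^(a-1) ∧ t < 2^(a-1) then (3:ℚ) else 1) * Zf s t) := by
  intro a ha s t hs ht
  rcases Nat.lt_or_ge a 2 with h2 | h2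
  · -- a = 1
    have haa : a = 1 := by omega
    subst haa
    norm_num at hs ht ⊢
    interval_cases s <;> interval_cases t <;>
      simp [Xm, Finset.sum_range_succ, Zf_00, Zf_01, Zf_10, Zf_11] <;> norm_num
  · obtain ⟨a', rfl⟩ : ∃ a', a = a' + 1 := ⟨a - 1, by omega⟩
    have ha' : 1 ≤ a' := by omega
    simp only [Nat.add_sub_cancel] at *
    have hpow : (2:ℕ)^(a'+1) = 2^a' + 2^a' := by ring
    have hpos : (1:ℕ) ≤ 2^a' := Nat.one_le_two_pow
    rw [hpow, Finset.sum_range_add]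
    have hlow : ∑ k ∈ range (2^a'), Zf s k * ((if 2^a' ≤ k then (-1:ℚ) else 1) * Xm (a'+1) k t)
        = if t < 2^a' then -Zf s t else 0 := by
      have h1 : ∀ k ∈ range (2^a'), Zf s k * ((if 2^a' ≤ k then (-1:ℚ) else 1) * Xm (a'+1) k t)
          = if t = k then -Zf s k else 0 := by
        intro k hk
        rw [mem_range] at hk
        rw [if_neg (show ¬ 2^a' ≤ k by omega), one_mul, Xm_low hk]
        by_cases h : t = k <;> simp [h]
      rw [Finset.sum_congr rfl h1, Finset.sum_ite_eq (range (2^a')) t (fun k => -Zf s k)]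
      simp [mem_range]
    rw [hlow]
    by_cases hts : t < 2^a'
    · rw [if_pos hts]
      have hhigh : ∀ k ∈ range (2^a'),
          Zf s (2^a' + k) * ((if 2^a' ≤ 2^a' + k then (-1:ℚ) else 1) * Xm (a'+1) (2^a' + k) t)
          = -(Zf s (2^a' + k) * (2 * Xm a' k t)) := by
        intro k hk
        rw [if_pos (show 2^a' ≤ 2^a' + k by omega), Xm_high_low (by omega) hts,
          Nat.add_sub_cancel_left]
        ring
      rw [Finset.sum_congr rfl hhigh]
      by_cases hsl : s < 2^a'
      · have hsh : ∀ k ∈ range (2^a'), -(Zf s (2^a' + k) * (2 * Xm a' k t))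
            = (if 2^(a'-1) ≤ s then (-1:ℚ) else 1) * (-2 * (Zf s k * Xm a' k t)) := by
          intro k hk
          rw [Zf_shift ha' k hsl]
          ring
        rw [Finset.sum_congr rfl hsh, ← Finset.mul_sum]
        have h2 : ∑ k ∈ range (2^a'), (-2:ℚ) * (Zf s k * Xm a' k t)
            = -2 * ((if 2^(a'-1) ≤ s then (-1:ℚ) else 1) * Zf s t) := by
          rw [← Finset.mul_sum, lemI1 a' ha' s t hsl hts]
        rw [h2, if_pos (show s < 2^a' ∧ t < 2^a' by exact ⟨hsl, hts⟩)]
        by_cases hc : 2^(a'-1) ≤ s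
        · rw [if_pos hc]; ring
        · rw [if_neg hc]; ring
      · have hz : ∀ k ∈ range (2^a'), -(Zf s (2^a' + k) * (2 * Xm a' k t)) = 0 := by
          intro k hk
          rw [mem_range] at hk
          rw [Zf_high (m := a') (by omega) (by omega) (by omega) (by omega)]
          ring
        rw [Finset.sum_congr rfl hz, Finset.sum_const, smul_zero,
          if_neg (show ¬ (s < 2^a' ∧ t < 2^a') by omega)]
        ring
    · rw [if_neg hts]
      have hhigh : ∀ k ∈ range (2^a'),
          Zf s (2^a' + k) * ((if 2^a' ≤ 2^a' + k then (-1:ℚ) else 1) * Xm (a'+1) (2^a' + k) t)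
          = if t - 2^a' = k then -Zf s (2^a' + k) else 0 := by
        intro k hk
        rw [mem_range] at hk
        rw [if_pos (show 2^a' ≤ 2^a' + k by omega), Xm_high_high (by omega) hts]
        by_cases h : t = 2^a' + k
        · rw [if_pos h, if_pos (show t - 2^a' = k by omega)]
          ring
        · rw [if_neg h, if_neg (show ¬ t - 2^a' = k by omega)]
          ring
      rw [Finset.sum_congr rfl hhigh,
        Finset.sum_ite_eq (range (2^a')) (t - 2^a') (fun k => -Zf s (2^a' + k)),
        if_pos (mem_range.mpr (by omega))]
      have ht2 : 2^a' + (t - 2^a') = t := by omega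
      rw [ht2, zero_add, if_neg (show ¬ (s < 2^a' ∧ t < 2^a') by omega)]
      ring

lemma beebF_succ_succ (n : ℕ) : beebF (n+2) =
    if 2 * ((n + 2) - 2 ^ Nat.log2 (n + 2)) < 2 ^ Nat.log2 (n + 2) then
      3 * beebF ((n + 2) - 2 ^ Nat.log2 (n + 2))
    else
      beebF ((n + 2) - 2 ^ Nat.log2 (n + 2)) / 3 := by
  rw [beebF]

lemma log2_eq {a x : ℕ} (h1 : 2^a ≤ x) (h2 : x < 2^(a+1)) : Nat.log2 x = a := by
  rw [Nat.log2_eq_log_two]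
  exact Nat.log_eq_of_pow_le_of_lt_pow h1 h2

lemma beebF_add_pow {a k : ℕ} (ha : 1 ≤ a) (hk : k < 2^a) :
    beebF (2^a + k) = if k < 2^(a-1) then 3 * beebF k else beebF k / 3 := by
  have ha' : a = (a-1) + 1 := by omega
  have hp : (2:ℕ)^a = 2 * 2^(a-1) := by
    calc (2:ℕ)^a = 2^((a-1)+1) := by rw [← ha']
    _ = 2 * 2^(a-1) := by rw [pow_succ]; ring
  have h2 : 2 ≤ 2^a := by omega
  obtain ⟨m, hm⟩ : ∃ m, 2^a + k = m + 2 := ⟨2^a + k - 2, by omega⟩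
  rw [hm, beebF_succ_succ]
  have hlog : Nat.log2 (m+2) = a := by
    apply log2_eq (by omega)
    have : (2:ℕ)^(a+1) = 2 * 2^a := by ring
    omega
  rw [hlog]
  have hsub : m + 2 - 2^a = k := by omega
  rw [hsub]
  by_cases hc : k < 2^(a-1)
  · rw [if_pos (by omega), if_pos hc]
  · rw [if_neg (by omega), if_neg hc]

lemma beebF_ne_zero : ∀ n, beebF n ≠ 0 := by
  intro n
  induction n using Nat.strong_induction_on with
  | _ n ih =>
    match n, ih with
    | 0, _ => norm_num [beebF]
    | 1, _ => norm_num [beebF]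
    | (m+2), ih =>
      rw [beebF_succ_succ]
      have h2 : 2 ≤ 2 ^ Nat.log2 (m + 2) := by
        have : (1:ℕ) ≤ Nat.log2 (m + 2) := by
          rw [Nat.le_log2 (by omega)]; omega
        calc (2:ℕ) = 2 ^ 1 := by norm_num
        _ ≤ 2 ^ Nat.log2 (m + 2) := Nat.pow_le_pow_right (by norm_num) this
      have hlt : (m+2) - 2 ^ Nat.log2 (m+2) < m + 2 := by omega
      have hne := ih _ hlt
      split
      · exact mul_ne_zero (by norm_num) hne
      · exact div_ne_zero hne (by norm_num)

open Finset in
lemma prod_ite_filter (b h : ℕ) :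
    ∏ k ∈ range b, (if k < h then (3:ℚ) else 1) = 3 ^ (min b h) := by
  rw [Finset.prod_ite, Finset.prod_const, Finset.prod_const, one_pow, mul_one]
  congr 1
  have : (range b).filter (fun k => k < h) = range (min b h) := by
    ext x
    simp only [mem_filter, mem_range, lt_min_iff]
  rw [this, card_range]

open Finset in
lemma card_filter_not_lt (b h : ℕ) :
    ((range b).filter (fun k => ¬ k < h)).card = b - min b h := by
  have h1 := Finset.card_filter_add_card_filter_not
    (s := range b) (p := fun k => k < h)
  have : (range b).filter (fun k => k < h) = range (min b h) := by
    ext x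
    simp only [mem_filter, mem_range, lt_min_iff]
  rw [this, card_range, card_range] at h1
  omega

open Finset Matrix

theorem det_beeblebrox (n : ℕ) :
    Matrix.det (Matrix.of fun s t : Fin n =>
      chiB (Nat.choose (s.val + t.val) s.val)) =
      ∏ k ∈ Finset.range n, beebF k := by
  induction n using Nat.strong_induction_on with
  | _ n ih =>
  by_cases h0 : n = 0
  · subst h0; simp
  by_cases h1 : n = 1
  · subst h1
    rw [show (range 1) = {0} from rfl]
    simp [Matrix.det_fin_one, chiB, beebF]
  by_cases h2' : n = 2
  · subst h2'
    rw [Matrix.det_fin_two]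
    simp only [Matrix.of_apply]
    norm_num [chiB, Finset.prod_range_succ, beebF]
  -- now n ≥ 3
  have hn3 : 3 ≤ n := by omega
  obtain ⟨a, b, ha1, hb1, hb2, rfl⟩ :
      ∃ a b, 1 ≤ a ∧ 1 ≤ b ∧ b ≤ 2^a ∧ n = 2^a + b := by
    refine ⟨Nat.log2 (n-1), n - 2^(Nat.log2 (n-1)), ?_, ?_, ?_, ?_⟩
    · rw [Nat.le_log2 (by omega)]; omega
    · have := Nat.log2_self_le (n := n-1) (by omega)
      omega
    · have h := Nat.lt_log2_self (n := n-1)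
      have hp : (2:ℕ)^(Nat.log2 (n-1) + 1) = 2 * 2^(Nat.log2 (n-1)) := by ring
      omega
    · have := Nat.log2_self_le (n := n-1) (by omega)
      omega
  clear h0 h1 h2' hn3
  have hpos : (1:ℕ) ≤ 2^a := Nat.one_le_two_pow
  have hpa : (2:ℕ)^((a-1)+1) = 2^a := by congr 1; omega
  have hpa2 : (2:ℕ)^a = 2 * 2^(a-1) := by rw [← hpa, pow_succ]; ring
  -- the four blocks
  set A : Matrix (Fin (2^a)) (Fin (2^a)) ℚ :=
    Matrix.of (fun s t : Fin (2^a) => Zf s.val t.val) with hA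
  set Bm : Matrix (Fin (2^a)) (Fin b) ℚ :=
    Matrix.of (fun s t => Zf s.val (2^a + t.val)) with hBm
  set Cm : Matrix (Fin b) (Fin (2^a)) ℚ :=
    Matrix.of (fun s t => Zf (2^a + s.val) t.val) with hCm
  -- determinant of A and invertibility
  have hdetA : A.det = ∏ k ∈ range (2^a), beebF k := by
    have := ih (2^a) (by omega)
    exact this
  have hdetA_ne : A.det ≠ 0 := by
    rw [hdetA]
    exact Finset.prod_ne_zero_iff.mpr (fun k _ => beebF_ne_zero k)
  haveI : Invertible A := A.invertibleOfIsUnitDet (isUnit_iff_ne_zero.mpr hdetA_ne)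
  -- block decomposition
  have hblocks : det (Matrix.of fun s t : Fin (2^a + b) =>
      chiB (Nat.choose (s.val + t.val) s.val)) = det (fromBlocks A Bm Cm 0) := by
    rw [← Matrix.det_submatrix_equiv_self (finSumFinEquiv (m := 2^a) (n := b))]
    congr 1
    ext i j
    cases i with
    | inl s =>
        cases j with
        | inl t => simp [Matrix.submatrix_apply, hA, Zf]
        | inr t => simp [Matrix.submatrix_apply, hBm, Zf]
    | inr s =>
        cases j with
        | inl t => simp [Matrix.submatrix_apply, hCm, Zf]
        | inr t =>
            simp only [Matrix.submatrix_apply, finSumFinEquiv_apply_right,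
              Matrix.fromBlocks_apply₂₂, Matrix.of_apply, Matrix.zero_apply,
              Fin.natAdd_mk, Fin.coe_natAdd]
            have hs := s.isLt
            have ht := t.isLt
            exact Zf_high (m := a) (by omega) (by omega) (by omega) (by omega)
  rw [hblocks, Matrix.det_fromBlocks₁₁]
  -- the X matrix
  set Xι : Matrix (Fin (2^a)) (Fin b) ℚ :=
    Matrix.of (fun k t => Xm a k.val t.val) with hXι
  have hAX : A * Xι = Bm := by
    ext s t
    rw [Matrix.mul_apply]
    simp only [hA, hBm, hXι, Matrix.of_apply]
    rw [Fin.sum_univ_eq_sum_range (fun k => Zf s.val k * Xm a k t.val)]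
    rw [lemI1 a ha1 s.val t.val s.isLt (by have := t.isLt; omega)]
    rw [Zf_shift ha1 t.val s.isLt]
  have hinv : ⅟A * Bm = Xι := by
    rw [← hAX, ← Matrix.mul_assoc, invOf_mul_self, Matrix.one_mul]
  have hCX : Cm * Xι = Matrix.of (fun s t : Fin b =>
      -((if s.val < 2^(a-1) ∧ t.val < 2^(a-1) then (3:ℚ) else 1) * Zf s.val t.val)) := by
    ext s t
    rw [Matrix.mul_apply]
    simp only [hCm, hXι, Matrix.of_apply]
    rw [Fin.sum_univ_eq_sum_range (fun k => Zf (2^a + s.val) k * Xm a k t.val)]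
    have hterm : ∀ k ∈ range (2^a),
        Zf (2^a + s.val) k * Xm a k t.val
        = Zf s.val k * ((if 2^(a-1) ≤ k then (-1:ℚ) else 1) * Xm a k t.val) := by
      intro k hk
      rw [mem_range] at hk
      have h1 : Zf (2^a + s.val) k = Zf k (2^a + s.val) := Zf_comm _ _
      rw [h1, Zf_shift ha1 s.val hk, Zf_comm k s.val]
      ring
    rw [Finset.sum_congr rfl hterm,
      lemI2 a ha1 s.val t.val (by have := s.isLt; omega) (by have := t.isLt; omega)]
  rw [Matrix.mul_assoc, hinv, hCX]
  -- simplify 0 - (...) and factor the diagonal scaling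
  set h := 2^(a-1) with hh
  set m := min b h with hm
  have hNdet : det (0 - Matrix.of (fun s t : Fin b =>
      -((if s.val < h ∧ t.val < h then (3:ℚ) else 1) * Zf s.val t.val)))
      = (3:ℚ)⁻¹^b * (3^m * ((∏ k ∈ range b, beebF k) * 3^m)) := by
    have hN : (0 - Matrix.of (fun s t : Fin b =>
        -((if s.val < h ∧ t.val < h then (3:ℚ) else 1) * Zf s.val t.val)))
        = (3:ℚ)⁻¹ • (Matrix.diagonal (fun k : Fin b => if k.val < h then (3:ℚ) else 1) *
            Matrix.of (fun s t : Fin b => Zf s.val t.val) *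
            Matrix.diagonal (fun k : Fin b => if k.val < h then (3:ℚ) else 1)) := by
      ext s t
      simp only [Matrix.sub_apply, Matrix.zero_apply, Matrix.of_apply, Matrix.smul_apply,
        Matrix.diagonal_mul, Matrix.mul_diagonal, smul_eq_mul]
      by_cases hs' : s.val < h
      · by_cases ht' : t.val < h
        · rw [if_pos ⟨hs', ht'⟩, if_pos hs', if_pos ht']; ring
        · rw [if_neg (by tauto), if_pos hs', if_neg ht']; ring
      · by_cases ht' : t.val < h
        · rw [if_neg (by tauto), if_neg hs', if_pos ht']; ring
        · have hz : Zf s.val t.val = 0 := by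
            apply Zf_high (m := a-1) (by omega) ?_ (by omega) ?_
            · rw [hpa]; have := s.isLt; omega
            · rw [hpa]; have := t.isLt; omega
          rw [hz]
          simp
    rw [hN, Matrix.det_smul, Matrix.det_mul, Matrix.det_mul, Matrix.det_diagonal,
      Fintype.card_fin]
    have hprod : ∏ k : Fin b, (if k.val < h then (3:ℚ) else 1) = 3^m := by
      rw [Fin.prod_univ_eq_prod_range (fun k => if k < h then (3:ℚ) else 1)]
      exact prod_ite_filter b h
    rw [hprod]
    have hdetMb : det (Matrix.of (fun s t : Fin b => Zf s.val t.val))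
        = ∏ k ∈ range b, beebF k := by
      have := ih b (by omega)
      exact this
    rw [hdetMb]
    ring
  rw [hNdet, hdetA]
  -- right-hand side
  rw [Finset.prod_range_add]
  have hstep : ∀ i ∈ range b, beebF (2^a + i)
      = (if i < h then (3:ℚ) else 3⁻¹) * beebF i := by
    intro i hi
    rw [mem_range] at hi
    rw [beebF_add_pow ha1 (by omega)]
    by_cases hc : i < h
    · rw [if_pos hc, if_pos hc]
    · rw [if_neg hc, if_neg hc]
      rw [div_eq_mul_inv]
      ring
  rw [Finset.prod_congr rfl hstep, Finset.prod_mul_distrib]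
  have hcoef : ∏ i ∈ range b, (if i < h then (3:ℚ) else 3⁻¹)
      = 3^m * (3⁻¹)^(b - m) := by
    rw [Finset.prod_ite, Finset.prod_const, Finset.prod_const]
    congr 2
    · have : (range b).filter (fun k => k < h) = range (min b h) := by
        ext x
        simp only [mem_filter, mem_range, lt_min_iff]
      rw [this, card_range, hm]
    · rw [card_filter_not_lt b h, hm]
  rw [hcoef]
  -- final algebra
  have hmb : m ≤ b := by rw [hm]; omega
  have hbm : b = m + (b - m) := by omega
  have h3 : (3:ℚ)⁻¹^m * 3^m = 1 := by
    rw [← mul_pow]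
    norm_num
  calc (∏ k ∈ range (2^a), beebF k) * ((3:ℚ)⁻¹^b * (3^m * ((∏ k ∈ range b, beebF k) * 3^m)))
      = (∏ k ∈ range (2^a), beebF k) * (((3:ℚ)⁻¹^m * 3^m) * ((3⁻¹)^(b-m) * 3^m * ∏ k ∈ range b, beebF k)) := by
        rw [hbm, pow_add]
        ring_nf
        rw [← hbm]
    _ = (∏ k ∈ range (2^a), beebF k) * (3^m * (3⁻¹)^(b-m) * ∏ k ∈ range b, beebF k) := by
        rw [h3]
        ring
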